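/- Let G be a finite abelian group. In the additive monoid ℕ₀^λ, where λ is the number of minimal zero-sum sequences U₁,…,U_λ over G of length D(G), the set H consisting of 0 together with all tuples (k₁,…,k_λ) such that ρ(L(∏ Uᵢ^{kᵢ})) = D(G)/2 is a saturated submonoid of (ℕ₀^λ, +), hence finitely generated. -/

import Mathlib

def IsMinZS {G : Type*} [AddCommGroup G] (U : Multiset G) : Prop :=
  U ≠ 0 ∧ U.sum = 0 ∧ ∀ V ≤ U, V ≠ 0 → V.sum = 0 → V = U

noncomputable def DavC (G : Type*) [AddCommGroup G] : ℕ :=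
  sSup {n | ∃ U : Multiset G, IsMinZS U ∧ U.card = n}

def LSet {G : Type*} [AddCommGroup G] (A : Multiset G) : Set ℕ :=
  {k | ∃ l : Multiset (Multiset G), l.card = k ∧ (∀ U ∈ l, IsMinZS U) ∧ l.sum = A}

noncomputable def rhoSet (L : Set ℕ) : ℚ := ((sSup L : ℕ) : ℚ) / ((sInf L : ℕ) : ℚ)

def IsIntervalSet (L : Set ℕ) : Prop := L.Nonempty ∧ L = Set.Icc (sInf L) (sSup L)

section aux
variable {G : Type*} [AddCommGroup G]

lemma minZS_card_le [Fintype G] {V : Multiset G} (h : IsMinZS V) :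
    V.card ≤ Fintype.card G := by
  obtain ⟨hne, hsum, hmin⟩ := h
  set l := V.toList with hl
  have hVl : (l : Multiset G) = V := V.coe_toList
  have hlen : l.length = V.card := by rw [← hVl]; simp
  -- partial sums map
  have hinj : Function.Injective (fun i : Fin l.length => (l.take (i.1+1)).sum) := by
    intro i j hij
    by_contra hne'
    wlog hlt : i.1 < j.1 generalizing i j
    · exact this hij.symm (Ne.symm hne') (by omega)
    · -- segment from i+1 to j+1 sums to zero
      set seg := (l.take (j.1+1)).drop (i.1+1) with hseg
      have htt : (l.take (j.1+1)).take (i.1+1) = l.take (i.1+1) := by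
        rw [List.take_take]; congr 1; omega
      have hsplit : l.take (i.1+1) ++ seg = l.take (j.1+1) := by
        rw [← htt, hseg, List.take_append_drop]
      have hsegsum : seg.sum = 0 := by
        have := congrArg List.sum hsplit
        simp only [List.sum_append] at this
        have hij' : (l.take (i.1+1)).sum = (l.take (j.1+1)).sum := hij
        have h2 : (l.take (i.1+1)).sum + seg.sum = (l.take (i.1+1)).sum + 0 := by
          rw [add_zero, this, ← hij']
        exact add_left_cancel h2
      have hsegle : (seg : Multiset G) ≤ V := by
        calc (seg : Multiset G) ≤ (l.take (j.1+1) : Multiset G) := by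
              rw [← hsplit]; push_cast
              exact (List.sublist_append_right _ _).subperm
          _ ≤ (l : Multiset G) := by
              exact (List.take_sublist _ _).subperm
          _ = V := hVl
      have hsegne : (seg : Multiset G) ≠ 0 := by
        have : seg.length = j.1 - i.1 := by
          rw [hseg, List.length_drop, List.length_take]
          have := j.2; omega
        simp only [ne_eq, Multiset.coe_eq_zero]
        intro h0; rw [h0] at this; simp at this; omega
      have := hmin _ hsegle hsegne (by simpa using hsegsum)
      have hcard := congrArg Multiset.card this
      simp only [Multiset.coe_card] at hcard
      rw [← hVl] at hcard
      simp only [Multiset.coe_card] at hcard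
      have hlseg : seg.length = j.1 - i.1 := by
        rw [hseg, List.length_drop, List.length_take]
        have := j.2; omega
      have := j.2; omega
  have := Fintype.card_le_of_injective _ hinj
  simpa [hlen] using this

lemma bddAbove_minZS [Fintype G] :
    BddAbove {n | ∃ U : Multiset G, IsMinZS U ∧ U.card = n} :=
  ⟨Fintype.card G, fun n ⟨V, hV, hc⟩ => hc ▸ minZS_card_le hV⟩

lemma zero_minZS : IsMinZS ({0} : Multiset G) := by
  refine ⟨by simp, by simp, fun V hle hne _ => ?_⟩
  have := Multiset.card_le_card hle
  simp only [Multiset.card_singleton] at this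
  have h0 : V.card ≠ 0 := fun h => hne (Multiset.card_eq_zero.mp h)
  exact Multiset.eq_of_le_of_card_le hle (by simp; omega)

lemma card_le_davC [Fintype G] {V : Multiset G} (h : IsMinZS V) : V.card ≤ DavC G :=
  le_csSup bddAbove_minZS ⟨V, h, rfl⟩

lemma one_le_davC [Fintype G] : 1 ≤ DavC G := by
  have := card_le_davC (zero_minZS (G := G)); simpa using this

lemma pair_minZS {g : G} (hg : g ≠ 0) : IsMinZS ({g, -g} : Multiset G) := by
  refine ⟨by simp, by simp, fun V hle hne hsum => ?_⟩
  have hcle := Multiset.card_le_card hle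
  simp only [Multiset.insert_eq_cons, Multiset.card_cons, Multiset.card_singleton] at hcle
  have h1 : V.card ≠ 1 := by
    intro h1
    obtain ⟨x, hx⟩ := Multiset.card_eq_one.mp h1
    have hxm : x ∈ ({g, -g} : Multiset G) := by
      apply Multiset.mem_of_le hle; rw [hx]; simp
    simp only [Multiset.insert_eq_cons, Multiset.mem_cons, Multiset.mem_singleton] at hxm
    rw [hx] at hsum; simp at hsum
    rcases hxm with rfl | rfl
    · exact hg hsum
    · exact hg (by simpa using hsum)
  have h0 : V.card ≠ 0 := fun h => hne (Multiset.card_eq_zero.mp h)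
  exact Multiset.eq_of_le_of_card_le hle (by simp; omega)

lemma two_le_davC [Fintype G] (hG : Nontrivial G) : 2 ≤ DavC G := by
  obtain ⟨g, hg⟩ := exists_ne (0 : G)
  have := card_le_davC (pair_minZS hg)
  simpa using this

end aux

section paired
variable {G : Type*} [AddCommGroup G] [DecidableEq G]

def Paired (C : Multiset G) : Prop :=
  (0 : G) ∉ C ∧ (∀ g : G, C.count g = C.count (-g)) ∧
    (∀ g : G, g = -g → Even (C.count g))

lemma paired_zero : Paired (0 : Multiset G) := ⟨by simp, by simp, by simp⟩

lemma count_pair (g x : G) :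
    ({g, -g} : Multiset G).count x
      = (if x = g then 1 else 0) + (if x = -g then 1 else 0) := by
  simp only [Multiset.insert_eq_cons, Multiset.count_cons, Multiset.count_singleton]
  exact add_comm _ _

lemma paired_pair {g : G} (hg : g ≠ 0) : Paired ({g, -g} : Multiset G) := by
  refine ⟨?_, fun x => ?_, fun x hx => ?_⟩
  · simp only [Multiset.insert_eq_cons, Multiset.mem_cons, Multiset.mem_singleton]
    push_neg
    exact ⟨Ne.symm hg, fun h => hg (by simpa using h.symm)⟩
  · rw [count_pair, count_pair]
    have h1 : (-x = g) ↔ (x = -g) := neg_eq_iff_eq_neg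
    have h2 : (-x = -g) ↔ (x = g) := neg_inj
    simp only [h1, h2]
    exact add_comm _ _
  · rw [count_pair]
    have : (x = g) ↔ (x = -g) := by
      constructor
      · intro h; exact hx.trans (by rw [h])
      · intro h; exact hx.trans (by rw [h, neg_neg])
    by_cases hxg : x = g
    · rw [if_pos hxg, if_pos (this.mp hxg)]; exact ⟨1, rfl⟩
    · rw [if_neg hxg, if_neg (fun h => hxg (this.mpr h))]; exact ⟨0, rfl⟩

lemma paired_add {A B : Multiset G} (hA : Paired A) (hB : Paired B) : Paired (A + B) := by
  obtain ⟨h0A, hcA, heA⟩ := hA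
  obtain ⟨h0B, hcB, heB⟩ := hB
  exact ⟨by simp [h0A, h0B], fun g => by simp [Multiset.count_add, hcA g, hcB g],
    fun g hg => by simpa [Multiset.count_add] using (heA g hg).add (heB g hg)⟩

lemma paired_of_add {A C : Multiset G} (hA : Paired A) (hAC : Paired (A + C)) : Paired C := by
  obtain ⟨h0A, hcA, heA⟩ := hA
  obtain ⟨h0AC, hcAC, heAC⟩ := hAC
  refine ⟨fun h => h0AC (by simp [h]), fun g => ?_, fun g hg => ?_⟩
  · have := hcAC g
    simp only [Multiset.count_add] at this
    rw [hcA g] at this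
    omega
  · have h1 := heAC g hg
    have h2 := heA g hg
    simp only [Multiset.count_add] at h1
    rcases h1 with ⟨m, hm⟩; rcases h2 with ⟨n, hn⟩
    exact ⟨m - n, by omega⟩

lemma pair_sum_minZS {V : Multiset G} (hV : IsMinZS V) (hc : V.card = 2) :
    ∃ g : G, g ≠ 0 ∧ V = {g, -g} := by
  obtain ⟨a, b, rfl⟩ := Multiset.card_eq_two.mp hc
  obtain ⟨hne, hsum, hmin⟩ := hV
  have hab : a + b = 0 := by simpa using hsum
  have hb : b = -a := by
    have := congrArg (fun z => z - a) hab
    simpa [add_sub_cancel_left, sub_eq_add_neg] using this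
  have ha : a ≠ 0 := by
    intro h
    subst h
    have h01 : ({(0:G)} : Multiset G) ≤ ({0, b} : Multiset G) := by
      rw [Multiset.insert_eq_cons]
      exact Multiset.cons_le_cons _ (Multiset.zero_le _)
    have := hmin {0} h01 (by simp) (by simp)
    have hcard := congrArg Multiset.card this
    rw [hc] at hcard
    simp at hcard
  exact ⟨a, ha, by rw [hb]⟩

lemma paired_iff {C : Multiset G} :
    Paired C ↔ ∃ l : Multiset (Multiset G),
      (∀ V ∈ l, IsMinZS V ∧ V.card = 2) ∧ l.sum = C := by
  constructor
  · intro h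
    induction C using Multiset.strongInductionOn with
    | ih C ih =>
      rcases Multiset.empty_or_exists_mem C with rfl | ⟨g, hg⟩
      · exact ⟨0, by simp, by simp⟩
      · obtain ⟨h0, hc, he⟩ := h
        have hgne : g ≠ 0 := fun hh => h0 (hh ▸ hg)
        have hP : ({g, -g} : Multiset G) ≤ C := by
          rw [Multiset.le_iff_count]
          intro x
          rw [count_pair]
          have hgmem : 1 ≤ C.count g := Multiset.one_le_count_iff_mem.mpr hg
          by_cases hx : g = -g
          · have hge2 : 2 ≤ C.count g := by
              rcases he g hx with ⟨m, hm⟩; omega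
            by_cases hxg : x = g
            · subst hxg; rw [if_pos rfl, if_pos hx]; omega
            · rw [if_neg hxg, if_neg (fun hh => hxg (hh.trans hx.symm))]; omega
          · have hgmem' : 1 ≤ C.count (-g) := by rw [← hc g]; omega
            by_cases hxg : x = g
            · subst hxg
              rw [if_pos rfl, if_neg hx]; omega
            · by_cases hxg' : x = -g
              · subst hxg'; rw [if_neg hxg, if_pos rfl]; omega
              · rw [if_neg hxg, if_neg hxg']; omega
        obtain ⟨C', hC'⟩ := Multiset.le_iff_exists_add.mp hP
        have hPp : Paired ({g, -g} : Multiset G) := paired_pair hgne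
        have hC'p : Paired C' := paired_of_add hPp (hC' ▸ ⟨h0, hc, he⟩)
        have hlt : C' < C := by
          rw [hC']
          have hne0 : ({g, -g} : Multiset G) ≠ 0 := by simp
          exact lt_add_of_pos_left _ (bot_lt_iff_ne_bot.mpr hne0)
        obtain ⟨l, hl, hls⟩ := ih C' hlt hC'p
        refine ⟨({g, -g} : Multiset G) ::ₘ l, ?_, ?_⟩
        · intro V hV
          rcases Multiset.mem_cons.mp hV with rfl | hV'
          · exact ⟨pair_minZS hgne, by simp⟩
          · exact hl V hV'
        · rw [Multiset.sum_cons, hls, hC']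
  · rintro ⟨l, hl, rfl⟩
    induction l using Multiset.induction with
    | empty => exact ⟨by simp, by simp, by simp⟩
    | cons V l ih =>
      rw [Multiset.sum_cons]
      have hV := hl V (Multiset.mem_cons_self _ _)
      obtain ⟨g, hgne, hVg⟩ := pair_sum_minZS hV.1 hV.2
      exact paired_add (hVg ▸ paired_pair hgne)
        (ih (fun W hW => hl W (Multiset.mem_cons_of_mem hW)))

end paired

section Lfacts
variable {G : Type*} [AddCommGroup G] [Fintype G]

lemma card_sum_multiset (l : Multiset (Multiset G)) :
    l.sum.card = (l.map Multiset.card).sum := Multiset.card_join l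

lemma card_finsum {α ι : Type*} (s : Finset ι) (f : ι → Multiset α) :
    (∑ i ∈ s, f i).card = ∑ i ∈ s, (f i).card := by
  classical
  induction s using Finset.induction with
  | empty => simp
  | insert _ _ hx ih => simp_all [Finset.sum_insert hx]

lemma sum_finsum {M ι : Type*} [AddCommMonoid M] (s : Finset ι) (f : ι → Multiset M) :
    (∑ i ∈ s, f i).sum = ∑ i ∈ s, (f i).sum := by
  classical
  induction s using Finset.induction with
  | empty => simp
  | insert _ _ hx ih => simp_all [Finset.sum_insert hx]

lemma card_le_of_mem_LSet {A : Multiset G} {m : ℕ} (hm : m ∈ LSet A) : m ≤ A.card := by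
  obtain ⟨l, hcard, hmin, hsum⟩ := hm
  have h1 : (l.map (fun _ => 1)).sum ≤ (l.map Multiset.card).sum := by
    apply Multiset.sum_map_le_sum_map
    intro V hV
    exact Multiset.card_pos.mpr (hmin V hV).1
  have h2 : (l.map (fun _ => (1:ℕ))).sum = l.card := by
    simp
  rw [← hsum, card_sum_multiset, ← hcard, ← h2]
  exact h1

lemma LSet_bddAbove (A : Multiset G) : BddAbove (LSet A) :=
  ⟨A.card, fun _ hm => card_le_of_mem_LSet hm⟩

lemma zero_not_mem_U [Nontrivial G] {W : Multiset G} (hW : IsMinZS W)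
    (hcard : W.card = DavC G) : (0 : G) ∉ W := by
  intro h0
  have hle : ({(0:G)} : Multiset G) ≤ W := Multiset.singleton_le.mpr h0
  have := hW.2.2 {0} hle (by simp) (by simp)
  have hc := congrArg Multiset.card this
  simp only [Multiset.card_singleton] at hc
  rw [hcard] at hc
  have := two_le_davC (inferInstance : Nontrivial G)
  omega

variable [DecidableEq G]

lemma key_equiv [Nontrivial G] {lam : ℕ} {U : Fin lam → Multiset G}
    (hU : ∀ i, IsMinZS (U i) ∧ (U i).card = DavC G)
    (k : Fin lam → ℕ) (hk : k ≠ 0) :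
    (rhoSet (LSet (∑ i, k i • U i)) = (DavC G : ℚ) / 2) ↔ Paired (∑ i, k i • U i) := by
  set D := DavC G with hD
  set A := ∑ i, k i • U i with hA
  set sA := ∑ i, k i with hsA
  have hD2 : 2 ≤ D := two_le_davC inferInstance
  have hsA1 : 1 ≤ sA := by
    rcases Nat.eq_zero_or_pos sA with h | h
    · exfalso
      apply hk
      funext i
      exact (Finset.sum_eq_zero_iff.mp h) i (Finset.mem_univ i)
    · exact h
  have hcardA : A.card = sA * D := by
    rw [hA, card_finsum, Finset.sum_mul]
    apply Finset.sum_congr rfl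
    intro i _
    rw [Multiset.card_nsmul, (hU i).2]
  have h0A : (0 : G) ∉ A := by
    rw [hA]
    intro h
    obtain ⟨i, _, hi⟩ := Multiset.mem_sum.mp h
    exact zero_not_mem_U (hU i).1 (hU i).2 (Multiset.mem_nsmul.mp hi).2
  have hmem : sA ∈ LSet A := by
    refine ⟨∑ i, k i • ({U i} : Multiset (Multiset G)), ?_, ?_, ?_⟩
    · rw [card_finsum]
      apply Finset.sum_congr rfl
      intro i _
      rw [Multiset.card_nsmul, Multiset.card_singleton, mul_one]
    · intro V hV
      obtain ⟨i, _, hi⟩ := Multiset.mem_sum.mp hV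
      have := (Multiset.mem_nsmul.mp hi).2
      rw [Multiset.mem_singleton] at this
      rw [this]; exact (hU i).1
    · rw [hA, sum_finsum]
      apply Finset.sum_congr rfl
      intro i _
      rw [Multiset.nsmul_singleton, Multiset.sum_replicate]
  have hlow : ∀ m ∈ LSet A, sA ≤ m := by
    intro m hm
    obtain ⟨l, hcard, hmin, hsum⟩ := hm
    have h1 : (l.map Multiset.card).sum ≤ (l.map (fun _ => D)).sum := by
      apply Multiset.sum_map_le_sum_map
      intro V hV
      exact card_le_davC (hmin V hV)
    have h2 : (l.map (fun _ => D)).sum = m * D := by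
      simp [hcard, mul_comm]
    rw [← card_sum_multiset, hsum, hcardA] at h1
    rw [h2] at h1
    exact Nat.le_of_mul_le_mul_right h1 (by omega)
  have h2Vgen : ∀ (l : Multiset (Multiset G)), (∀ V ∈ l, IsMinZS V) → l.sum = A →
      ∀ V ∈ l, 2 ≤ V.card := by
    intro l hmin hsum V hV
    have hVm := hmin V hV
    have hVle : V ≤ A := by
      rw [← hsum]
      obtain ⟨l', hl'⟩ := Multiset.exists_cons_of_mem hV
      rw [hl', Multiset.sum_cons]
      exact le_add_of_nonneg_right (Multiset.zero_le _)
    by_contra hc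
    push_neg at hc
    interval_cases h : V.card
    · exact hVm.1 (Multiset.card_eq_zero.mp h)
    · obtain ⟨x, hx⟩ := Multiset.card_eq_one.mp h
      have : x = 0 := by
        have := hVm.2.1; rw [hx] at this; simpa using this
      apply h0A
      rw [← this]
      exact Multiset.mem_of_le hVle (by rw [hx]; simp)
  have hhigh : ∀ m ∈ LSet A, 2 * m ≤ sA * D := by
    intro m hm
    obtain ⟨l, hcard, hmin, hsum⟩ := hm
    have h2V : ∀ V ∈ l, 2 ≤ V.card := h2Vgen l hmin hsum
    have h1 : (l.map (fun _ => 2)).sum ≤ (l.map Multiset.card).sum :=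
      Multiset.sum_map_le_sum_map _ _ (fun V hV => h2V V hV)
    have h2 : (l.map (fun _ => (2:ℕ))).sum = m * 2 := by simp [hcard, mul_comm]
    rw [← card_sum_multiset, hsum, hcardA, h2] at h1
    omega
  have hLne : (LSet A).Nonempty := ⟨sA, hmem⟩
  have hinf : sInf (LSet A) = sA :=
    le_antisymm (Nat.sInf_le hmem) (le_csInf hLne hlow)
  have hsup_mem : sSup (LSet A) ∈ LSet A := Nat.sSup_mem hLne (LSet_bddAbove A)
  -- rho equation
  set n := sSup (LSet A) with hn
  have hrho : rhoSet (LSet A) = ((n : ℕ) : ℚ) / ((sA : ℕ) : ℚ) := by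
    simp only [rhoSet, hinf, hn]
  have hiff1 : (rhoSet (LSet A) = (D : ℚ) / 2) ↔ 2 * n = sA * D := by
    rw [hrho, div_eq_div_iff (by positivity) (by norm_num : (2:ℚ) ≠ 0)]
    constructor
    · intro h
      have h' : ((2 * n : ℕ) : ℚ) = ((sA * D : ℕ) : ℚ) := by push_cast; linarith
      exact_mod_cast h'
    · intro h
      have h' : ((2 * n : ℕ) : ℚ) = ((sA * D : ℕ) : ℚ) :=
        congrArg (Nat.cast : ℕ → ℚ) h
      push_cast at h'
      linarith
  rw [hiff1]
  constructor
  · -- sup = sA*D/2 → Paired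
    intro h
    obtain ⟨l, hcard, hmin, hsum⟩ := hsup_mem
    have hall2 : ∀ V ∈ l, V.card = 2 := by
      intro V hV
      have h2V := h2Vgen l hmin hsum
      by_contra hne2
      obtain ⟨l', hl'⟩ := Multiset.exists_cons_of_mem hV
      have hsplit : (l.map Multiset.card).sum = V.card + (l'.map Multiset.card).sum := by
        rw [hl', Multiset.map_cons, Multiset.sum_cons]
      have hl'2 : 2 * l'.card ≤ (l'.map Multiset.card).sum := by
        have := Multiset.sum_map_le_sum_map (fun _ : Multiset G => 2) Multiset.card
          (fun W hW => h2V W (by rw [hl']; exact Multiset.mem_cons_of_mem hW))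
        simpa [Multiset.map_const', mul_comm] using this
      have hcards : l'.card + 1 = n := by
        rw [← hcard, hl', Multiset.card_cons]
      have htot : (l.map Multiset.card).sum = sA * D := by
        rw [← card_sum_multiset, hsum, hcardA]
      have hV2 := h2V V hV
      omega
    rw [← hsum]
    apply paired_iff.mpr
    exact ⟨l, fun V hV => ⟨hmin V hV, hall2 V hV⟩, rfl⟩
  · -- Paired → sup
    intro hp
    obtain ⟨l, hl, hsum⟩ := paired_iff.mp hp
    have hcardl : 2 * l.card = sA * D := by
      have : (l.map Multiset.card).sum = (l.map (fun _ => 2)).sum := by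
        apply congrArg
        exact Multiset.map_congr rfl (fun V hV => (hl V hV).2)
      rw [← card_sum_multiset, hsum, hcardA] at this
      simp [Multiset.map_const'] at this
      omega
    have hlm : l.card ∈ LSet A := ⟨l, rfl, fun V hV => (hl V hV).1, hsum⟩
    have h1 : l.card ≤ sSup (LSet A) := le_csSup (LSet_bddAbove A) hlm
    have h2 := hhigh _ hsup_mem
    omega

end Lfacts

section triv
variable {G : Type*} [AddCommGroup G] [Fintype G]

lemma mem_LSet_sA {lam : ℕ} {U : Fin lam → Multiset G}
    (hU : ∀ i, IsMinZS (U i)) (k : Fin lam → ℕ) :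
    (∑ i, k i) ∈ LSet (∑ i, k i • U i) := by
  refine ⟨∑ i, k i • ({U i} : Multiset (Multiset G)), ?_, ?_, ?_⟩
  · rw [card_finsum]
    apply Finset.sum_congr rfl
    intro i _
    rw [Multiset.card_nsmul, Multiset.card_singleton, mul_one]
  · intro V hV
    obtain ⟨i, _, hi⟩ := Multiset.mem_sum.mp hV
    have := (Multiset.mem_nsmul.mp hi).2
    rw [Multiset.mem_singleton] at this
    rw [this]; exact hU i
  · rw [sum_finsum]
    apply Finset.sum_congr rfl
    intro i _
    rw [Multiset.nsmul_singleton, Multiset.sum_replicate]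

lemma davC_triv (hs : Subsingleton G) : DavC G = 1 := by
  have hset : {n | ∃ U : Multiset G, IsMinZS U ∧ U.card = n} = {1} := by
    ext n
    constructor
    · rintro ⟨W, hW, rfl⟩
      obtain ⟨g, hg⟩ := Multiset.exists_mem_of_ne_zero hW.1
      have hg0 : g = 0 := Subsingleton.elim g 0
      have := hW.2.2 {0} (Multiset.singleton_le.mpr (hg0 ▸ hg)) (by simp) (by simp)
      rw [← this]
      simp
    · rintro rfl
      exact ⟨{0}, zero_minZS, rfl⟩
  rw [DavC, hset, csSup_singleton]

lemma triv_case (hs : Subsingleton G) {lam : ℕ} {U : Fin lam → Multiset G}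
    (hU : ∀ i, IsMinZS (U i) ∧ (U i).card = DavC G)
    (k : Fin lam → ℕ) (hk : k ≠ 0) :
    rhoSet (LSet (∑ i, k i • U i)) ≠ (DavC G : ℚ) / 2 := by
  have hD1 : DavC G = 1 := davC_triv hs
  set A := ∑ i, k i • U i with hA
  set sA := ∑ i, k i with hsA
  have hsA1 : 1 ≤ sA := by
    rcases Nat.eq_zero_or_pos sA with h | h
    · exact absurd (funext fun i => (Finset.sum_eq_zero_iff.mp h) i (Finset.mem_univ i)) hk
    · exact h
  have hcardA : A.card = sA := by
    rw [hA, card_finsum]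
    apply Finset.sum_congr rfl
    intro i _
    rw [Multiset.card_nsmul, (hU i).2, hD1, mul_one]
  have hall : ∀ m ∈ LSet A, m = sA := by
    intro m hm
    obtain ⟨l, hcard, hmin, hsum⟩ := hm
    have h1 : ∀ V ∈ l, V.card = 1 := by
      intro V hV
      have hle := card_le_davC (hmin V hV)
      rw [hD1] at hle
      have : V.card ≠ 0 := fun h => (hmin V hV).1 (Multiset.card_eq_zero.mp h)
      omega
    have : (l.map Multiset.card).sum = l.card := by
      rw [Multiset.map_congr rfl h1]
      simp
    rw [← card_sum_multiset, hsum, hcardA, hcard] at this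
    omega
  have hmem : sA ∈ LSet A := mem_LSet_sA (fun i => (hU i).1) k
  have hsup : sSup (LSet A) = sA :=
    hall _ (Nat.sSup_mem ⟨sA, hmem⟩ (LSet_bddAbove A))
  have hinf : sInf (LSet A) = sA := hall _ (Nat.sInf_mem ⟨sA, hmem⟩)
  intro h
  rw [rhoSet, hsup, hinf, hD1, div_self (by exact_mod_cast Nat.one_le_iff_ne_zero.mp hsA1 ∘ Nat.cast_injective.eq_iff.mp)] at h
  norm_num at h

end triv

lemma fg_of_saturated {lam : ℕ} (H : Set (Fin lam → ℕ)) (h0 : 0 ∈ H)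
    (hsub : ∀ x ∈ H, ∀ y ∈ H, (∀ i, x i ≤ y i) → y - x ∈ H) :
    ∃ S : Finset (Fin lam → ℕ), (S : Set (Fin lam → ℕ)) ⊆ H ∧
      H ⊆ (AddSubmonoid.closure (S : Set (Fin lam → ℕ)) : Set (Fin lam → ℕ)) := by
  classical
  set M := {m : Fin lam → ℕ | m ∈ H ∧ m ≠ 0 ∧
    ∀ y ∈ H, y ≠ 0 → (∀ i, y i ≤ m i) → y = m} with hM
  have hanti : IsAntichain (· ≤ ·) M := by
    intro a ha b hb hne hab
    exact hne (hb.2.2 a ha.1 ha.2.1 (fun i => hab i))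
  have hMfin : M.Finite := hanti.finite_of_partiallyWellOrderedOn (Set.isPWO_of_wellQuasiOrderedLE M)
  refine ⟨hMfin.toFinset, ?_, ?_⟩
  · intro m hm
    rw [Finset.mem_coe, Set.Finite.mem_toFinset] at hm
    exact hm.1
  · have hexist : ∀ n, ∀ x ∈ H, x ≠ 0 → (∑ i, x i) = n →
        ∃ m ∈ M, ∀ i, m i ≤ x i := by
      intro n
      induction n using Nat.strong_induction_on with
      | _ n ih =>
        intro x hxH hx0 hn
        by_cases hxM : x ∈ M
        · exact ⟨x, hxM, fun i => le_refl _⟩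
        · have : ∃ y ∈ H, y ≠ 0 ∧ (∀ i, y i ≤ x i) ∧ y ≠ x := by
            by_contra hcon
            push_neg at hcon
            apply hxM
            exact ⟨hxH, hx0, fun y hy hy0 hyle => hcon y hy hy0 hyle⟩
          obtain ⟨y, hyH, hy0, hyle, hyne⟩ := this
          have hlt : (∑ i, y i) < n := by
            rw [← hn]
            apply Finset.sum_lt_sum (fun i _ => hyle i)
            obtain ⟨i, hi⟩ := Function.ne_iff.mp hyne
            exact ⟨i, Finset.mem_univ i, lt_of_le_of_ne (hyle i) hi⟩
          obtain ⟨m, hmM, hmle⟩ := ih _ hlt y hyH hy0 rfl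
          exact ⟨m, hmM, fun i => le_trans (hmle i) (hyle i)⟩
    have hmain : ∀ n, ∀ x ∈ H, (∑ i, x i) = n →
        x ∈ AddSubmonoid.closure (hMfin.toFinset : Set (Fin lam → ℕ)) := by
      intro n
      induction n using Nat.strong_induction_on with
      | _ n ih =>
        intro x hxH hn
        by_cases hx0 : x = 0
        · subst hx0; exact zero_mem _
        · obtain ⟨m, hmM, hmle⟩ := hexist _ x hxH hx0 hn
          have hdiff : x - m ∈ H := hsub m hmM.1 x hxH hmle
          have hlt : (∑ i, (x - m) i) < n := by
            rw [← hn]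
            apply Finset.sum_lt_sum (fun i _ => by simp [Pi.sub_apply])
            obtain ⟨i, hi⟩ := Function.ne_iff.mp hmM.2.1
            simp only [Pi.zero_apply] at hi
            refine ⟨i, Finset.mem_univ i, ?_⟩
            have := hmle i
            simp only [Pi.sub_apply]
            omega
          have hmem := ih _ hlt (x - m) hdiff rfl
          have hxeq : x = m + (x - m) := by
            funext i
            simp only [Pi.add_apply, Pi.sub_apply]
            have := hmle i
            omega
          rw [hxeq]
          refine add_mem (AddSubmonoid.subset_closure ?_) hmem
          rw [Finset.mem_coe, Set.Finite.mem_toFinset]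
          exact hmM
    intro x hx
    exact hmain _ x hx rfl

theorem stmt4 {G : Type*} [AddCommGroup G] [Fintype G] (lam : ℕ)
    (U : Fin lam → Multiset G) (hUinj : Function.Injective U)
    (hrange : Set.range U = {W : Multiset G | IsMinZS W ∧ W.card = DavC G}) :
    ∀ H : Set (Fin lam → ℕ),
      H = {k | k = 0 ∨ rhoSet (LSet (∑ i, k i • U i)) = (DavC G : ℚ) / 2} →
      (0 ∈ H) ∧ (∀ x ∈ H, ∀ y ∈ H, x + y ∈ H) ∧
      (∀ x ∈ H, ∀ y ∈ H, (∀ i, x i ≤ y i) → y - x ∈ H) ∧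
      ∃ S : Finset (Fin lam → ℕ), (S : Set (Fin lam → ℕ)) ⊆ H ∧
        H ⊆ (AddSubmonoid.closure (S : Set (Fin lam → ℕ)) : Set (Fin lam → ℕ)) := by
  intro H hH
  letI : DecidableEq G := Classical.decEq G
  have hU : ∀ i, IsMinZS (U i) ∧ (U i).card = DavC G := by
    intro i
    have : U i ∈ Set.range U := Set.mem_range_self i
    rw [hrange] at this
    exact this
  have hAadd : ∀ x y : Fin lam → ℕ,
      (∑ i, (x + y) i • U i) = (∑ i, x i • U i) + (∑ i, y i • U i) := by
    intro x y
    rw [← Finset.sum_add_distrib]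
    apply Finset.sum_congr rfl
    intro i _
    rw [Pi.add_apply, add_nsmul]
  rcases subsingleton_or_nontrivial G with hs | hnt
  · -- trivial group: H = {0}
    have hchar : ∀ k, k ∈ H ↔ k = 0 := by
      intro k
      rw [hH]
      constructor
      · rintro (rfl | hr)
        · rfl
        · by_contra hk0
          exact triv_case hs hU k hk0 hr
      · intro h; exact Or.inl h
    refine ⟨(hchar 0).mpr rfl, ?_, ?_, ?_⟩
    · intro x hx y hy
      rw [hchar] at hx hy ⊢
      rw [hx, hy, add_zero]
    · intro x hx y hy _
      rw [hchar] at hx hy ⊢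
      rw [hx, hy]
      funext i
      simp
    · refine ⟨∅, by simp, ?_⟩
      intro x hx
      rw [hchar] at hx
      rw [hx]
      exact zero_mem _
  · -- nontrivial group
    have hchar : ∀ k, k ∈ H ↔ Paired (∑ i, k i • U i) := by
      intro k
      rw [hH]
      constructor
      · rintro (rfl | hr)
        · convert paired_zero (G := G)
          · simp
        · by_cases hk0 : k = 0
          · subst hk0; simpa using paired_zero (G := G)
          · exact (key_equiv hU k hk0).mp hr
      · intro hp
        by_cases hk0 : k = 0
        · exact Or.inl hk0
        · exact Or.inr ((key_equiv hU k hk0).mpr hp)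
    have h0 : (0 : Fin lam → ℕ) ∈ H := by
      rw [hchar]
      simpa using paired_zero (G := G)
    have hadd : ∀ x ∈ H, ∀ y ∈ H, x + y ∈ H := by
      intro x hx y hy
      rw [hchar] at hx hy ⊢
      rw [hAadd]
      exact paired_add hx hy
    have hsub : ∀ x ∈ H, ∀ y ∈ H, (∀ i, x i ≤ y i) → y - x ∈ H := by
      intro x hx y hy hle
      rw [hchar] at hx hy ⊢
      apply paired_of_add hx
      rw [← hAadd]
      have : x + (y - x) = y := by
        funext i
        simp only [Pi.add_apply, Pi.sub_apply]
        have := hle i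
        omega
      rw [this]
      exact hy
    exact ⟨h0, hadd, hsub, fg_of_saturated H h0 hsub⟩
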